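/- Let 0 < ω < 1 be real and let κ̄ ∈ (1,e) be the solution of κ(1 − log κ) = ω in (1,e). For every real x ≥ e, setting m̄ = ⌊κ̄·log x⌋ and ᾱ = κ̄·log(x) − m̄, and for α equal to either ᾱ or 1, one has 0 ≤ li_{ω̄,α}(x) − li_*(x) ≤ S̄ · x^(1−ω) · √(log x), where S̄ = √(2π/κ̄)·(κ̄ + 1)·e^(13/12). -/

import Mathlib

/-- The Stieltjes asymptotic approximation of `li(x)`:
`li_*(x) = (x/log x)·Σ_{k=0}^{n−1} k!/(log x)^k + (log x − n)·x·n!/(log x)^(n+1)`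
with `n = ⌊log x⌋`. -/
noncomputable def liStar (x : ℝ) : ℝ :=
  x / Real.log x *
      ∑ k ∈ Finset.range ⌊Real.log x⌋₊, (Nat.factorial k : ℝ) / Real.log x ^ k
    + (Real.log x - ⌊Real.log x⌋₊) * x * (Nat.factorial ⌊Real.log x⌋₊ : ℝ)
      / Real.log x ^ (⌊Real.log x⌋₊ + 1)

/-- The truncated asymptotic approximation of `li(x)` with truncation parameter `κ`
and fractional coefficient `α`:
`li_{κ,α}(x) = (x/log x)·(α·m!/(log x)^m + Σ_{k=0}^{m−1} k!/(log x)^k)` with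
`m = ⌊κ·log x⌋`. -/
noncomputable def liApprox (κ α x : ℝ) : ℝ :=
  x / Real.log x *
    (α * (Nat.factorial ⌊κ * Real.log x⌋₊ : ℝ) / Real.log x ^ ⌊κ * Real.log x⌋₊
      + ∑ k ∈ Finset.range ⌊κ * Real.log x⌋₊, (Nat.factorial k : ℝ) / Real.log x ^ k)

lemma myFactLe (m : ℕ) (hm : 1 ≤ m) :
    (Nat.factorial m : ℝ) ≤ Real.exp 1 * Real.sqrt m * (m / Real.exp 1) ^ m := by
  have h0 : Stirling.stirlingSeq m ≤ Stirling.stirlingSeq 1 := by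
    have := Stirling.stirlingSeq'_antitone (Nat.zero_le (m - 1))
    rw [Function.comp_def] at this
    simp only [Nat.succ_eq_add_one] at this
    rwa [Nat.sub_add_cancel hm] at this
  rw [Stirling.stirlingSeq_one] at h0
  have hden : 0 < Real.sqrt (2 * m) * ((m : ℝ) / Real.exp 1) ^ m := by
    have : (0:ℝ) < m := by exact_mod_cast hm
    positivity
  have h1 : (Nat.factorial m : ℝ) ≤ (Real.exp 1 / Real.sqrt 2) * (Real.sqrt (2 * m) * ((m : ℝ) / Real.exp 1) ^ m) := by
    have := (div_le_iff₀ hden).mp h0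
    simpa [Stirling.stirlingSeq] using this
  calc (Nat.factorial m : ℝ) ≤ _ := h1
    _ = Real.exp 1 * Real.sqrt m * (m / Real.exp 1) ^ m := by
        rw [show (2:ℝ) * m = 2 * m from rfl, Real.sqrt_mul (by norm_num : (0:ℝ) ≤ 2)]
        have h2 : Real.sqrt 2 ≠ 0 := by positivity
        field_simp


lemma myGmono (L a b : ℝ) (hL : 1 ≤ L) (hLa : L ≤ a) (hab : a ≤ b) :
    a * (Real.log a - Real.log L - 1) ≤ b * (Real.log b - Real.log L - 1) := by
  set f : ℝ → ℝ := fun t => t * (Real.log t - Real.log L - 1) with hf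
  have hL0 : (0:ℝ) < L := lt_of_lt_of_le one_pos hL
  have hder : ∀ t : ℝ, t ≠ 0 → HasDerivAt f (Real.log t - Real.log L) t := by
    intro t ht0
    have h1 : HasDerivAt (fun s : ℝ => Real.log s - Real.log L - 1) (1/t) t := by
      simpa using ((Real.hasDerivAt_log ht0).sub_const (Real.log L)).sub_const 1
    have h2 := (hasDerivAt_id t).mul h1
    have heq : 1 * (Real.log t - Real.log L - 1) + id t * (1/t) = Real.log t - Real.log L := by
      simp only [id]; field_simp; ring
    rw [heq] at h2
    simpa [hf, id, Pi.mul_def] using h2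
  have key : MonotoneOn f (Set.Ici L) := by
    apply monotoneOn_of_deriv_nonneg (convex_Ici L)
    · apply ContinuousOn.mul continuousOn_id
      apply ContinuousOn.sub (ContinuousOn.sub _ continuousOn_const) continuousOn_const
      exact Real.continuousOn_log.mono (fun t ht => by
        simp only [Set.mem_compl_iff, Set.mem_singleton_iff]
        exact (lt_of_lt_of_le hL0 ht).ne')
    · intro t ht
      rw [interior_Ici] at ht
      exact ((hder t (lt_trans hL0 ht).ne').differentiableAt).differentiableWithinAt
    · intro t ht
      rw [interior_Ici] at ht
      rw [(hder t (lt_trans hL0 ht).ne').deriv]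
      have := Real.log_le_log hL0 ht.le
      linarith
  exact key (Set.mem_Ici.2 hLa) (Set.mem_Ici.2 (hLa.trans hab)) hab

lemma myNum0 : Real.exp 1 ^ (11:ℕ) ≤ 6.283184 ^ (6:ℕ) := by
  calc (Real.exp 1) ^ (11:ℕ) ≤ (2.7182818286 : ℝ) ^ 11 :=
        pow_le_pow_left₀ (Real.exp_pos 1).le Real.exp_one_lt_d9.le 11
    _ ≤ (6.283184 : ℝ) ^ 6 := by norm_num

lemma myNum1 : Real.exp (11/6 : ℝ) ≤ 2 * Real.pi := by
  have h6 : (Real.exp (11/6 : ℝ)) ^ 6 ≤ (2 * Real.pi) ^ 6 := by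
    rw [← Real.exp_nat_mul]
    have h : ((6:ℕ):ℝ) * (11/6 : ℝ) = (11:ℕ) * (1:ℝ) := by norm_num
    rw [h, Real.exp_nat_mul]
    have h2 : ((6.283184 : ℝ)) ^ (6:ℕ) ≤ (2 * Real.pi) ^ (6:ℕ) := by
      apply pow_le_pow_left₀ (by norm_num)
      nlinarith [Real.pi_gt_d6]
    exact le_trans myNum0 h2
  exact le_of_pow_le_pow_left₀ (by norm_num) (by positivity) h6

lemma myNum2 : Real.exp (17/6 : ℝ) ≤ 8 * Real.pi := by
  have h6 : (Real.exp (17/6 : ℝ)) ^ 6 ≤ (8 * Real.pi) ^ 6 := by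
    rw [← Real.exp_nat_mul]
    have h : ((6:ℕ):ℝ) * (17/6 : ℝ) = (17:ℕ) * (1:ℝ) := by norm_num
    rw [h, Real.exp_nat_mul]
    have h1 : (Real.exp 1) ^ (17:ℕ) ≤ (2.7182818286 : ℝ) ^ 17 :=
      pow_le_pow_left₀ (Real.exp_pos 1).le Real.exp_one_lt_d9.le 17
    have h2 : ((25.132736 : ℝ)) ^ (6:ℕ) ≤ (8 * Real.pi) ^ (6:ℕ) := by
      apply pow_le_pow_left₀ (by norm_num)
      nlinarith [Real.pi_gt_d6]
    calc (Real.exp 1) ^ (17:ℕ) ≤ (2.7182818286 : ℝ) ^ 17 := h1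
      _ ≤ (25.132736 : ℝ) ^ 6 := by norm_num
      _ ≤ (8 * Real.pi) ^ 6 := h2
  exact le_of_pow_le_pow_left₀ (by norm_num) (by positivity) h6


set_option maxHeartbeats 1000000 in
/-- For `0 < ω < 1`, `κ̄ ∈ (1,e)` the solution of `κ(1−log κ) = ω`,
every real `x ≥ e`, `m̄ = ⌊κ̄·log x⌋`, `ᾱ = κ̄·log x − m̄`, and `α ∈ {ᾱ, 1}`, one has
`0 ≤ li_{ω̄,α}(x) − li_*(x) ≤ S̄·x^(1−ω)·√(log x)` with `S̄ = √(2π/κ̄)·(κ̄+1)·e^(13/12)`. -/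
theorem liApprox_upper_sub_liStar_le_S (ω κ : ℝ) (hω0 : 0 < ω) (hω1 : ω < 1)
    (hκ1 : 1 < κ) (hκe : κ < Real.exp 1) (hsol : κ * (1 - Real.log κ) = ω)
    (x : ℝ) (hx : Real.exp 1 ≤ x) (α : ℝ)
    (hα : α = κ * Real.log x - ⌊κ * Real.log x⌋₊ ∨ α = 1) :
    0 ≤ liApprox κ α x - liStar x ∧
      liApprox κ α x - liStar x ≤
        Real.sqrt (2 * Real.pi / κ) * (κ + 1) * Real.exp (13 / 12) * x ^ (1 - ω)
          * Real.sqrt (Real.log x) := by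
  have hx0 : (0:ℝ) < x := lt_of_lt_of_le (Real.exp_pos 1) hx
  have hL1 : 1 ≤ Real.log x := by
    rw [show (1:ℝ) = Real.log (Real.exp 1) by rw [Real.log_exp]]
    exact Real.log_le_log (Real.exp_pos 1) hx
  set L := Real.log x with hLdef
  have hL0 : (0:ℝ) < L := lt_of_lt_of_le one_pos hL1
  set n := ⌊L⌋₊ with hn
  set m := ⌊κ * L⌋₊ with hm
  have hκ0 : (0:ℝ) < κ := lt_trans one_pos hκ1
  have hκL0 : (0:ℝ) ≤ κ * L := by positivity
  have hnm : n ≤ m := Nat.floor_le_floor (by nlinarith)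
  have hnL : (n:ℝ) ≤ L := Nat.floor_le hL0.le
  have hLn1 : L < n + 1 := Nat.lt_floor_add_one L
  have hmκL : (m:ℝ) ≤ κ * L := Nat.floor_le hκL0
  have hn1 : 1 ≤ n := Nat.le_floor (by exact_mod_cast hL1)
  have hm1 : 1 ≤ m := hn1.trans hnm
  have hκLm1 : κ * L < (m:ℝ) + 1 := by
    have := Nat.lt_floor_add_one (κ * L)
    exact_mod_cast this
  have hα0 : 0 ≤ α := by
    rcases hα with h | h
    · rw [h]; linarith
    · rw [h]; norm_num
  have hα1 : α ≤ 1 := by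
    rcases hα with h | h
    · rw [h]; linarith
    · exact le_of_eq h
  set T : ℝ := α * (Nat.factorial m : ℝ) / L ^ m
      + ∑ k ∈ Finset.Ico n m, (Nat.factorial k : ℝ) / L ^ k
      - (L - n) * (Nat.factorial n : ℝ) / L ^ n with hT
  have hdiff : liApprox κ α x - liStar x = x / L * T := by
    rw [hT]
    unfold liApprox liStar
    rw [← hLdef, ← hn, ← hm]
    have hsplit : ∑ k ∈ Finset.range m, (Nat.factorial k : ℝ) / L ^ k
        = ∑ k ∈ Finset.range n, (Nat.factorial k : ℝ) / L ^ k
          + ∑ k ∈ Finset.Ico n m, (Nat.factorial k : ℝ) / L ^ k := by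
      rw [Finset.range_eq_Ico, Finset.range_eq_Ico]
      exact (Finset.sum_Ico_consecutive (fun k => (Nat.factorial k : ℝ) / L ^ k) (Nat.zero_le n) hnm).symm
    rw [hsplit, pow_succ]
    field_simp
    ring
  clear_value T n m L
  -- nonnegativity of T
  have hTnonneg : 0 ≤ T := by
    rw [hT]
    rcases eq_or_lt_of_le hnm with heq | hlt
    · rw [← heq, Finset.Ico_self, Finset.sum_empty]
      have hαn : L - n ≤ α := by
        rcases hα with h | h
        · rw [h, ← heq]; nlinarith
        · rw [h]; linarith
      have hfn : (0:ℝ) ≤ (Nat.factorial n : ℝ) / L ^ n := by positivity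
      have : α * (Nat.factorial n : ℝ) / L ^ n - (L - ↑n) * (Nat.factorial n : ℝ) / L ^ n
          = (α - (L - n)) * ((Nat.factorial n : ℝ) / L ^ n) := by ring
      rw [add_zero, this]
      exact mul_nonneg (by linarith) hfn
    · have hsingle : (Nat.factorial n : ℝ) / L ^ n
          ≤ ∑ k ∈ Finset.Ico n m, (Nat.factorial k : ℝ) / L ^ k :=
        Finset.single_le_sum (f := fun k => (Nat.factorial k : ℝ) / L ^ k)
          (fun k _ => by positivity) (Finset.mem_Ico.2 ⟨le_refl n, hlt⟩)
      have h1 : 0 ≤ α * (Nat.factorial m : ℝ) / L ^ m := by positivity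
      have hfn : (0:ℝ) ≤ (Nat.factorial n : ℝ) / L ^ n := by positivity
      have h2 : (L - n) * (Nat.factorial n : ℝ) / L ^ n ≤ (Nat.factorial n : ℝ) / L ^ n := by
        rw [mul_div_assoc]
        nlinarith
      linarith
  constructor
  · rw [hdiff]
    exact mul_nonneg (by positivity) hTnonneg
  -- upper bound
  have hxL : x = Real.exp L := by rw [hLdef]; exact (Real.exp_log hx0).symm
  have hxpow : x * Real.exp (-(ω*L)) = x ^ (1-ω) := by
    rw [Real.rpow_def_of_pos hx0, ← hLdef]
    rw [show L * (1-ω) = L + (-(ω*L)) by ring, Real.exp_add, ← hxL]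
  have hpow_eq : ∀ j : ℕ, 1 ≤ j →
      ((j:ℝ) / Real.exp 1) ^ j / L ^ j
        = Real.exp ((j:ℝ) * (Real.log j - Real.log L - 1)) := by
    intro j hj
    have hj0 : (0:ℝ) < j := by exact_mod_cast hj
    have hb : (0:ℝ) < (j:ℝ) / (Real.exp 1 * L) := by positivity
    have h2 : Real.log ((j:ℝ) / (Real.exp 1 * L)) = Real.log j - Real.log L - 1 := by
      rw [Real.log_div hj0.ne' (by positivity), Real.log_mul (Real.exp_ne_zero 1) hL0.ne',
        Real.log_exp]
      ring
    rw [← div_pow, div_div]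
    rw [← Real.exp_log hb, ← Real.exp_nat_mul, h2]
  -- case split
  rcases lt_or_ge (m:ℝ) L with hmL | hLm
  · -- small case: m = n
    have hmn : m = n := le_antisymm (hn ▸ Nat.le_floor hmL.le) hnm
    have hTle : T ≤ (Nat.factorial n : ℝ) / L ^ n := by
      rw [hT, hmn, Finset.Ico_self, Finset.sum_empty, add_zero]
      have hfn : (0:ℝ) ≤ (Nat.factorial n : ℝ) / L ^ n := by positivity
      have h2 : 0 ≤ (L - n) * (Nat.factorial n : ℝ) / L ^ n := by
        rw [mul_div_assoc]
        exact mul_nonneg (by linarith) hfn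
      have h3 : α * (Nat.factorial n : ℝ) / L ^ n ≤ (Nat.factorial n : ℝ) / L ^ n := by
        rw [mul_div_assoc]
        nlinarith
      linarith
    have hfb : (Nat.factorial n : ℝ) / L ^ n
        ≤ Real.exp 1 * Real.sqrt n * Real.exp ((n:ℝ) * (Real.log n - Real.log L - 1)) := by
      have h1 := myFactLe n hn1
      have hLn : (0:ℝ) < L ^ n := by positivity
      rw [← hpow_eq n hn1, ← mul_div_assoc]
      gcongr
    have hexp2 : Real.exp ((n:ℝ) * (Real.log n - Real.log L - 1)) ≤ Real.exp (1 - ω * L) := by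
      apply Real.exp_le_exp.2
      have hlogn : Real.log n ≤ Real.log L := Real.log_le_log (by exact_mod_cast hn1) hnL
      have hn0 : (0:ℝ) < n := by exact_mod_cast hn1
      have h0 : (n:ℝ) * (Real.log n - Real.log L) ≤ 0 :=
        mul_nonpos_of_nonneg_of_nonpos hn0.le (by linarith)
      have h1 : (n:ℝ) * (Real.log n - Real.log L - 1)
          = (n:ℝ) * (Real.log n - Real.log L) - n := by ring
      have h2 : ω * L ≤ 1 * L := mul_le_mul_of_nonneg_right hω1.le hL0.le
      rw [h1]
      rw [one_mul] at h2
      linarith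
    have hsn : Real.sqrt n ≤ Real.sqrt L := Real.sqrt_le_sqrt hnL
    have hD : liApprox κ α x - liStar x
        ≤ Real.exp 1 * Real.exp 1 * Real.sqrt L * (x ^ (1-ω)) := by
      rw [hdiff]
      have h3 : Real.exp (1 - ω*L) = Real.exp 1 * Real.exp (-(ω*L)) := by
        rw [← Real.exp_add]; ring_nf
      have hchain : T ≤ Real.exp 1 * Real.sqrt L * (Real.exp 1 * Real.exp (-(ω*L))) := by
        calc T ≤ (Nat.factorial n : ℝ) / L ^ n := hTle
          _ ≤ Real.exp 1 * Real.sqrt n * Real.exp ((n:ℝ) * (Real.log n - Real.log L - 1)) := hfb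
          _ ≤ Real.exp 1 * Real.sqrt L * Real.exp (1 - ω*L) := by gcongr
          _ = Real.exp 1 * Real.sqrt L * (Real.exp 1 * Real.exp (-(ω*L))) := by rw [h3]
      calc x / L * T ≤ x / L * (Real.exp 1 * Real.sqrt L * (Real.exp 1 * Real.exp (-(ω*L)))) := by
            apply mul_le_mul_of_nonneg_left hchain (by positivity)
        _ ≤ x * (Real.exp 1 * Real.sqrt L * (Real.exp 1 * Real.exp (-(ω*L)))) := by
            have hxx : x / L ≤ x := by
              rw [div_le_iff₀ hL0]
              calc x = x * 1 := (mul_one x).symm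
                _ ≤ x * L := mul_le_mul_of_nonneg_left hL1 hx0.le
            exact mul_le_mul_of_nonneg_right hxx (by positivity)
        _ = Real.exp 1 * Real.exp 1 * Real.sqrt L * (x * Real.exp (-(ω*L))) := by ring
        _ = Real.exp 1 * Real.exp 1 * Real.sqrt L * (x ^ (1-ω)) := by rw [hxpow]
    refine hD.trans ?_
    have hconst : Real.exp 1 * Real.exp 1 ≤ Real.sqrt (2 * Real.pi / κ) * (κ + 1) * Real.exp (13/12) := by
      have hs : Real.sqrt (2 * Real.pi / Real.exp 1) ≤ Real.sqrt (2 * Real.pi / κ) := by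
        apply Real.sqrt_le_sqrt
        apply div_le_div_of_nonneg_left (by positivity) hκ0 hκe.le
      have hkey : Real.exp 1 * Real.exp 1 ≤ Real.sqrt (2 * Real.pi / Real.exp 1) * 2 * Real.exp (13/12) := by
        have ha : (0:ℝ) ≤ Real.exp (11/12 : ℝ) / 2 := by positivity
        have hsq : (Real.exp (11/12 : ℝ) / 2) ^ 2 ≤ 2 * Real.pi / Real.exp 1 := by
          rw [div_pow, ← Real.exp_nat_mul]
          rw [le_div_iff₀ (Real.exp_pos 1), div_mul_eq_mul_div, div_le_iff₀ (by norm_num : (0:ℝ) < 2^2)]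
          have : Real.exp (((2:ℕ):ℝ) * (11/12)) * Real.exp 1 = Real.exp (17/6 : ℝ) := by
            rw [← Real.exp_add]; norm_num
          rw [this]
          linarith [myNum2]
        have h4 : Real.exp (11/12 : ℝ) / 2 ≤ Real.sqrt (2 * Real.pi / Real.exp 1) :=
          (Real.le_sqrt ha (by positivity)).2 hsq
        have h5 : Real.exp 1 * Real.exp 1 = (Real.exp (11/12 : ℝ) / 2) * 2 * Real.exp (13/12) := by
          rw [div_mul_cancel₀ _ (by norm_num : (2:ℝ) ≠ 0), ← Real.exp_add, ← Real.exp_add]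
          norm_num
        rw [h5]
        apply mul_le_mul_of_nonneg_right _ (Real.exp_pos _).le
        apply mul_le_mul_of_nonneg_right h4 (by norm_num)
      refine hkey.trans ?_
      apply mul_le_mul_of_nonneg_right _ (Real.exp_pos _).le
      apply mul_le_mul hs (by linarith) (by norm_num) (Real.sqrt_nonneg _)
    calc Real.exp 1 * Real.exp 1 * Real.sqrt L * x ^ (1-ω)
        ≤ (Real.sqrt (2 * Real.pi / κ) * (κ + 1) * Real.exp (13/12)) * Real.sqrt L * x ^ (1-ω) := by
          apply mul_le_mul_of_nonneg_right _ (Real.rpow_nonneg hx0.le _)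
          exact mul_le_mul_of_nonneg_right hconst (Real.sqrt_nonneg _)
      _ = Real.sqrt (2 * Real.pi / κ) * (κ + 1) * Real.exp (13/12) * x ^ (1-ω) * Real.sqrt L := by
          ring
  · -- main case: L ≤ m
    have hterm : ∀ k j : ℕ, n ≤ k → k ≤ j →
        (Nat.factorial k : ℝ) / L ^ k ≤ (Nat.factorial j : ℝ) / L ^ j := by
      intro k j hk hkj
      induction j, hkj using Nat.le_induction with
      | base => exact le_rfl
      | succ M hM ih =>
        refine le_trans ih ?_
        have hnM : (n:ℝ) ≤ M := by exact_mod_cast hk.trans hM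
        have hLM : L ≤ (M:ℝ) + 1 := by linarith
        rw [div_le_div_iff₀ (by positivity) (by positivity)]
        calc (Nat.factorial M : ℝ) * L ^ (M+1)
            = (Nat.factorial M : ℝ) * L ^ M * L := by rw [pow_succ]; ring
          _ ≤ (Nat.factorial M : ℝ) * L ^ M * ((M:ℝ)+1) :=
              mul_le_mul_of_nonneg_left hLM (by positivity)
          _ = (Nat.factorial (M+1) : ℝ) * L ^ M := by
              rw [Nat.factorial_succ]; push_cast; ring
    have hsumIcc : ∑ k ∈ Finset.Icc n m, (Nat.factorial k : ℝ) / L ^ k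
        ≤ ((m + 1 - n : ℕ):ℝ) * ((Nat.factorial m : ℝ) / L ^ m) := by
      have h := Finset.sum_le_card_nsmul (Finset.Icc n m)
        (fun k => (Nat.factorial k : ℝ) / L ^ k) ((Nat.factorial m : ℝ) / L ^ m)
        (fun k hk => hterm k m (Finset.mem_Icc.1 hk).1 (Finset.mem_Icc.1 hk).2)
      rw [Nat.card_Icc] at h
      simpa [nsmul_eq_mul] using h
    have hTle2 : T ≤ ((m + 1 - n : ℕ):ℝ) * ((Nat.factorial m : ℝ) / L ^ m) := by
      rw [hT]
      have hIcc : ∑ k ∈ Finset.Icc n m, (Nat.factorial k : ℝ) / L ^ k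
          = ∑ k ∈ Finset.Ico n m, (Nat.factorial k : ℝ) / L ^ k
            + (Nat.factorial m : ℝ) / L ^ m := by
        rw [← Finset.Ico_add_one_right_eq_Icc, Finset.sum_Ico_succ_top hnm]
      have hfm : (0:ℝ) ≤ (Nat.factorial m : ℝ) / L ^ m := by positivity
      have h1 : α * (Nat.factorial m : ℝ) / L ^ m ≤ (Nat.factorial m : ℝ) / L ^ m := by
        rw [mul_div_assoc]
        exact mul_le_of_le_one_left hfm hα1
      have h2 : 0 ≤ (L - n) * (Nat.factorial n : ℝ) / L ^ n := by
        rw [mul_div_assoc]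
        exact mul_nonneg (by linarith) (by positivity)
      linarith
    have hcard : ((m + 1 - n : ℕ):ℝ) ≤ (κ + 1) * L := by
      have hc : ((m + 1 - n : ℕ):ℝ) = (m:ℝ) + 1 - (n:ℝ) := by
        rw [Nat.cast_sub (by omega : n ≤ m + 1)]; push_cast; ring
      rw [hc]
      have hexpand : (κ + 1) * L = κ * L + L := by ring
      rw [hexpand]
      linarith
    have hfact : (Nat.factorial m : ℝ) / L ^ m
        ≤ Real.exp 1 * Real.sqrt m * Real.exp ((m:ℝ) * (Real.log m - Real.log L - 1)) := by
      have h1 := myFactLe m hm1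
      rw [← hpow_eq m hm1, ← mul_div_assoc]
      gcongr
    have hωL : (κ * L) * (Real.log (κ * L) - Real.log L - 1) = -(ω * L) := by
      rw [Real.log_mul hκ0.ne' hL0.ne']
      linear_combination (-L) * hsol
    have hexpm : Real.exp ((m:ℝ) * (Real.log m - Real.log L - 1)) ≤ Real.exp (-(ω * L)) := by
      apply Real.exp_le_exp.2
      rw [← hωL]
      exact myGmono L (m:ℝ) (κ * L) hL1 hLm hmκL
    have hsm : Real.sqrt m ≤ Real.sqrt κ * Real.sqrt L := by
      rw [← Real.sqrt_mul hκ0.le]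
      exact Real.sqrt_le_sqrt hmκL
    have hTle3 : T ≤ (κ + 1) * L
        * (Real.exp 1 * (Real.sqrt κ * Real.sqrt L) * Real.exp (-(ω * L))) := by
      refine hTle2.trans ?_
      apply mul_le_mul hcard ?_ (by positivity) (by positivity)
      calc (Nat.factorial m : ℝ) / L ^ m
          ≤ Real.exp 1 * Real.sqrt m * Real.exp ((m:ℝ) * (Real.log m - Real.log L - 1)) := hfact
        _ ≤ Real.exp 1 * (Real.sqrt κ * Real.sqrt L) * Real.exp (-(ω * L)) := by gcongr
    have hD : liApprox κ α x - liStar x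
        ≤ Real.exp 1 * Real.sqrt κ * (κ + 1) * x ^ (1 - ω) * Real.sqrt L := by
      rw [hdiff]
      calc x / L * T
          ≤ x / L * ((κ + 1) * L
            * (Real.exp 1 * (Real.sqrt κ * Real.sqrt L) * Real.exp (-(ω * L)))) :=
            mul_le_mul_of_nonneg_left hTle3 (by positivity)
        _ = Real.exp 1 * Real.sqrt κ * (κ + 1) * (x * Real.exp (-(ω * L))) * Real.sqrt L := by
            field_simp
        _ = Real.exp 1 * Real.sqrt κ * (κ + 1) * x ^ (1 - ω) * Real.sqrt L := by rw [hxpow]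
    refine hD.trans ?_
    have hconst2 : Real.exp 1 * Real.sqrt κ ≤ Real.sqrt (2 * Real.pi / κ) * Real.exp (13/12) := by
      have hB : (0:ℝ) ≤ Real.sqrt (2 * Real.pi / κ) * Real.exp (13/12) := by positivity
      apply le_of_pow_le_pow_left₀ (n := 2) two_ne_zero hB
      rw [mul_pow, mul_pow, Real.sq_sqrt hκ0.le,
        Real.sq_sqrt (by positivity : (0:ℝ) ≤ 2 * Real.pi / κ)]
      rw [div_mul_eq_mul_div, le_div_iff₀ hκ0]
      have hκκ : κ * κ ≤ Real.exp 1 * Real.exp 1 :=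
        mul_le_mul hκe.le hκe.le hκ0.le (Real.exp_pos 1).le
      have h1 : Real.exp 1 ^ 2 * κ * κ ≤ Real.exp 1 ^ 2 * (Real.exp 1 * Real.exp 1) := by
        calc Real.exp 1 ^ 2 * κ * κ = Real.exp 1 ^ 2 * (κ * κ) := by ring
          _ ≤ Real.exp 1 ^ 2 * (Real.exp 1 * Real.exp 1) :=
            mul_le_mul_of_nonneg_left hκκ (by positivity)
      have h2 : Real.exp 1 ^ 2 * (Real.exp 1 * Real.exp 1)
          = Real.exp (13/6 : ℝ) * Real.exp (11/6 : ℝ) := by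
        have h4 : Real.exp (13/6 : ℝ) * Real.exp (11/6 : ℝ)
            = Real.exp 1 * Real.exp 1 * (Real.exp 1 * Real.exp 1) := by
          rw [← Real.exp_add, ← Real.exp_add, ← Real.exp_add]
          congr 1
          norm_num
        rw [h4]; ring
      have h3 : Real.exp (13/6 : ℝ) * Real.exp (11/6 : ℝ)
          ≤ Real.exp (13/6 : ℝ) * (2 * Real.pi) :=
        mul_le_mul_of_nonneg_left myNum1 (Real.exp_pos _).le
      have h5 : Real.exp (13/12 : ℝ) ^ 2 = Real.exp (13/6 : ℝ) := by
        rw [sq, ← Real.exp_add]; norm_num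
      rw [h5]
      calc Real.exp 1 ^ 2 * κ * κ ≤ Real.exp (13/6 : ℝ) * (2 * Real.pi) := by linarith
        _ = 2 * Real.pi * Real.exp (13/6 : ℝ) := by ring
    calc Real.exp 1 * Real.sqrt κ * (κ + 1) * x ^ (1 - ω) * Real.sqrt L
        = (Real.exp 1 * Real.sqrt κ) * ((κ + 1) * x ^ (1 - ω) * Real.sqrt L) := by ring
      _ ≤ (Real.sqrt (2 * Real.pi / κ) * Real.exp (13/12))
          * ((κ + 1) * x ^ (1 - ω) * Real.sqrt L) := by
          apply mul_le_mul_of_nonneg_right hconst2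
          exact mul_nonneg (mul_nonneg (by linarith) (Real.rpow_nonneg hx0.le _))
            (Real.sqrt_nonneg _)
      _ = Real.sqrt (2 * Real.pi / κ) * (κ + 1) * Real.exp (13/12) * x ^ (1 - ω)
          * Real.sqrt L := by ring
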